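/- Let j and k be positive integers. Let S_k = {(w₁,…,w_j) ∈ {1,2,…,k}^j : w₁+⋯+w_j = k} and T_k = {(w₁,…,w_j) ∈ {1,2,…,k}^j : w₁,…,w_j are pairwise distinct and max(w₁,…,w_j) = k}. Then ∑_{(w₁,…,w_j)∈S_k} 1/(w₁⋯w_j) = ∑_{(w₁,…,w_j)∈T_k} 1/(w₁⋯w_j), as an identity of rational numbers. -/

import Mathlib

open Finset

namespace LubellAux

/-- composition sum with ambient bound K -/
def As (j K m : ℕ) : ℚ :=
  ∑ f ∈ (Fintype.piFinset fun _ : Fin j => Finset.Icc 1 K).filter (fun f => ∑ i, f i = m),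
    ∏ i, (1 : ℚ) / (f i : ℚ)

def A (j k : ℕ) : ℚ := As j k k

def B (j k : ℕ) : ℚ :=
  ∑ f ∈ (Fintype.piFinset fun _ : Fin j => Finset.Icc 1 k).filter
      (fun f => Function.Injective f ∧ ∃ i, f i = k),
    ∏ i, (1 : ℚ) / (f i : ℚ)

def C (j K : ℕ) : ℚ :=
  ∑ f ∈ (Fintype.piFinset fun _ : Fin j => Finset.Icc 1 K).filter
      (fun f => Function.Injective f),
    ∏ i, (1 : ℚ) / (f i : ℚ)

lemma As_eq {j K m : ℕ} (h : m ≤ K) : As j K m = A j m := by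
  unfold A As
  congr 1
  ext f
  simp only [mem_filter, Fintype.mem_piFinset, mem_Icc]
  constructor
  · rintro ⟨h1, h2⟩
    refine ⟨fun i => ⟨(h1 i).1, ?_⟩, h2⟩
    calc f i ≤ ∑ l, f l := Finset.single_le_sum (fun l _ => Nat.zero_le _) (mem_univ i)
    _ = m := h2
  · rintro ⟨h1, h2⟩
    exact ⟨fun i => ⟨(h1 i).1, le_trans (h1 i).2 h⟩, h2⟩

lemma piFinset_zero_empty (j : ℕ) (hj : 0 < j) :
    (Fintype.piFinset fun _ : Fin j => Finset.Icc 1 0) = ∅ := by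
  apply Finset.eq_empty_of_forall_notMem
  intro f h
  have := Fintype.mem_piFinset.mp h ⟨0, hj⟩
  simp at this

lemma A_zero {j : ℕ} (hj : 0 < j) : A j 0 = 0 := by
  unfold A As
  rw [piFinset_zero_empty j hj]
  simp

lemma B_zero {j : ℕ} (hj : 0 < j) : B j 0 = 0 := by
  unfold B
  rw [piFinset_zero_empty j hj]
  simp

lemma C_zero {j : ℕ} (hj : 0 < j) : C j 0 = 0 := by
  unfold C
  rw [piFinset_zero_empty j hj]
  simp

lemma C_succ {j : ℕ} (K : ℕ) : C j (K + 1) = C j K + B j (K + 1) := by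
  unfold C B
  rw [← Finset.sum_filter_add_sum_filter_not
    ((Fintype.piFinset fun _ : Fin j => Finset.Icc 1 (K+1)).filter (fun f => Function.Injective f))
    (fun f => ∃ i, f i = K + 1)]
  rw [add_comm]
  congr 1
  · rw [Finset.filter_filter]
    congr 1
    ext f
    simp only [mem_filter, Fintype.mem_piFinset, mem_Icc]
    constructor
    · rintro ⟨h1, h2, h3⟩
      refine ⟨fun i => ⟨(h1 i).1, ?_⟩, h2⟩
      have h4 : f i ≠ K + 1 := fun hc => h3 ⟨i, hc⟩
      have h5 := (h1 i).2
      omega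
    · rintro ⟨h1, h2⟩
      refine ⟨fun i => ⟨(h1 i).1, le_trans (h1 i).2 (Nat.le_succ K)⟩, h2, ?_⟩
      rintro ⟨i, hi⟩
      have := (h1 i).2
      omega
  · rw [Finset.filter_filter]

lemma C_eq {j : ℕ} (K : ℕ) (hj : 0 < j) : C j K = ∑ m ∈ Finset.Icc 1 K, B j m := by
  induction K with
  | zero => simp [C_zero hj]
  | succ K ih =>
    rw [C_succ, ih, Finset.sum_Icc_succ_top (by omega)]


lemma sum_comp_perm {n K : ℕ} (σ : Equiv.Perm (Fin n)) (P Q : (Fin n → ℕ) → Prop)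
    [DecidablePred P] [DecidablePred Q]
    (hPQ : ∀ f : Fin n → ℕ, P f ↔ Q (f ∘ σ)) (G H : (Fin n → ℕ) → ℚ)
    (hGH : ∀ f : Fin n → ℕ, G f = H (f ∘ σ)) :
    ∑ f ∈ (Fintype.piFinset fun _ : Fin n => Finset.Icc 1 K).filter P, G f
      = ∑ f ∈ (Fintype.piFinset fun _ : Fin n => Finset.Icc 1 K).filter Q, H f := by
  apply Finset.sum_nbij' (i := fun f => f ∘ σ) (j := fun f => f ∘ σ.symm)
  · intro f hf
    simp only [mem_filter, Fintype.mem_piFinset] at hf ⊢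
    exact ⟨fun l => hf.1 (σ l), (hPQ f).mp hf.2⟩
  · intro g hg
    simp only [mem_filter, Fintype.mem_piFinset] at hg ⊢
    refine ⟨fun l => hg.1 (σ.symm l), ?_⟩
    rw [hPQ]
    have : (g ∘ σ.symm) ∘ σ = g := by ext l; simp
    rw [this]
    exact hg.2
  · intro f _; ext l; simp
  · intro g _; ext l; simp
  · intro f _; exact hGH f

lemma A_rec (j k : ℕ) (hk : 0 < k) :
    (k : ℚ) * A (j+1) k = (j+1) * ∑ m ∈ Finset.range k, A j m := by
  unfold A As
  rw [Finset.mul_sum]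
  -- Step 1: k * prod = (∑ i, f i) * prod on the filter set
  have step1 : ∀ f ∈ (Fintype.piFinset fun _ : Fin (j+1) => Finset.Icc 1 k).filter
      (fun f => ∑ i, f i = k),
      (k:ℚ) * ∏ i, (1:ℚ)/(f i : ℚ) = ∑ i, (f i : ℚ) * ∏ l, (1:ℚ)/(f l : ℚ) := by
    intro f hf
    have hsum : ∑ i, f i = k := (Finset.mem_filter.mp hf).2
    rw [← Finset.sum_mul]
    congr 1
    rw [← hsum]
    push_cast
    rfl
  rw [Finset.sum_congr rfl step1, Finset.sum_comm]
  -- Step 3: every coordinate gives the same sum as the last coordinate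
  have step3 : ∀ i : Fin (j+1),
      ∑ f ∈ (Fintype.piFinset fun _ : Fin (j+1) => Finset.Icc 1 k).filter
        (fun f => ∑ i, f i = k), (f i : ℚ) * ∏ l, (1:ℚ)/(f l : ℚ)
      = ∑ f ∈ (Fintype.piFinset fun _ : Fin (j+1) => Finset.Icc 1 k).filter
        (fun f => ∑ i, f i = k), (f (Fin.last j) : ℚ) * ∏ l, (1:ℚ)/(f l : ℚ) := by
    intro i
    apply sum_comp_perm (Equiv.swap i (Fin.last j))
    · intro f
      simp only [Function.comp_apply]
      rw [Equiv.sum_comp (Equiv.swap i (Fin.last j)) f]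
    · intro f
      simp only [Function.comp_apply, Equiv.swap_apply_right]
      congr 1
      exact (Equiv.prod_comp (Equiv.swap i (Fin.last j)) (fun l => (1:ℚ)/(f l : ℚ))).symm
  rw [Finset.sum_congr rfl (fun i _ => step3 i), Finset.sum_const, Finset.card_univ,
    Fintype.card_fin, nsmul_eq_mul]
  push_cast
  congr 1
  -- Step 4: drop the last coordinate from the product
  have step4 : ∀ f ∈ (Fintype.piFinset fun _ : Fin (j+1) => Finset.Icc 1 k).filter
      (fun f => ∑ i, f i = k),
      (f (Fin.last j) : ℚ) * ∏ l, (1:ℚ)/(f l : ℚ)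
      = ∏ l : Fin j, (1:ℚ)/(f l.castSucc : ℚ) := by
    intro f hf
    have h1 : 1 ≤ f (Fin.last j) := by
      have := Fintype.mem_piFinset.mp (Finset.mem_filter.mp hf).1 (Fin.last j)
      exact (Finset.mem_Icc.mp this).1
    have hne : (f (Fin.last j) : ℚ) ≠ 0 := by
      exact Nat.cast_ne_zero.mpr (by omega)
    rw [Fin.prod_univ_castSucc]
    field_simp
  rw [Finset.sum_congr rfl step4]
  -- Step 5: reindex via snoc
  have step5 :
      ∑ f ∈ (Fintype.piFinset fun _ : Fin (j+1) => Finset.Icc 1 k).filter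
        (fun f => ∑ i, f i = k), ∏ l : Fin j, (1:ℚ)/(f l.castSucc : ℚ)
      = ∑ a ∈ Finset.Icc 1 k, ∑ g ∈ (Fintype.piFinset fun _ : Fin j => Finset.Icc 1 k).filter
          (fun g => ∑ i, g i = k - a), ∏ l, (1:ℚ)/(g l : ℚ) := by
    rw [Finset.sum_sigma']
    apply Finset.sum_nbij' (i := fun f => (⟨f (Fin.last j), Fin.init f⟩ :
        (_ : ℕ) × (Fin j → ℕ))) (j := fun x => Fin.snoc x.2 x.1)
    · rintro f hf
      simp only [Finset.mem_filter, Fintype.mem_piFinset, Finset.mem_sigma] at hf ⊢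
      obtain ⟨h1, h2⟩ := hf
      have hlast := h1 (Fin.last j)
      have hsum : ∑ l : Fin j, f l.castSucc + f (Fin.last j) = k := by
        rw [← Fin.sum_univ_castSucc]; exact h2
      refine ⟨hlast, fun l => h1 l.castSucc, ?_⟩
      have : f (Fin.last j) ≤ k := (Finset.mem_Icc.mp hlast).2
      unfold Fin.init
      omega
    · rintro ⟨a, g⟩ hx
      simp only [Finset.mem_filter, Fintype.mem_piFinset, Finset.mem_sigma] at hx ⊢
      obtain ⟨ha, hg, hgs⟩ := hx
      constructor
      · intro l
        induction l using Fin.lastCases with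
        | last => rw [Fin.snoc_last]; exact ha
        | cast l => rw [Fin.snoc_castSucc]; exact hg l
      · rw [Fin.sum_univ_castSucc]
        simp only [Fin.snoc_last, Fin.snoc_castSucc]
        have := (Finset.mem_Icc.mp ha).2
        omega
    · intro f _
      exact Fin.snoc_init_self f
    · rintro ⟨a, g⟩ _
      simp [Fin.snoc_last, Fin.init_snoc]
    · intro f _
      simp [Fin.init]
  rw [step5]
  -- change variables a ↦ k - a and remove the ambient bound
  have step6 : ∀ a ∈ Finset.Icc 1 k,
      (∑ g ∈ (Fintype.piFinset fun _ : Fin j => Finset.Icc 1 k).filter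
          (fun g => ∑ i, g i = k - a), ∏ l, (1:ℚ)/(g l : ℚ)) = A j (k - a) := by
    intro a ha
    have : k - a ≤ k := Nat.sub_le _ _
    rw [show (∑ g ∈ (Fintype.piFinset fun _ : Fin j => Finset.Icc 1 k).filter
          (fun g => ∑ i, g i = k - a), ∏ l, (1:ℚ)/(g l : ℚ)) = As j k (k - a) from rfl]
    exact As_eq this
  rw [Finset.sum_congr rfl step6]
  apply Finset.sum_nbij' (i := fun a => k - a) (j := fun m => k - m)
  · intro a ha
    simp only [Finset.mem_Icc] at ha
    simp only [Finset.mem_range]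
    omega
  · intro m hm
    simp only [Finset.mem_range] at hm
    simp only [Finset.mem_Icc]
    omega
  · intro a ha
    simp only [Finset.mem_Icc] at ha
    omega
  · intro m hm
    simp only [Finset.mem_range] at hm
    omega
  · intro a ha
    rfl

lemma B_rec (j k : ℕ) (hk : 0 < k) :
    (k : ℚ) * B (j+1) k = (j+1) * C j (k-1) := by
  unfold B C
  -- expand each summand as a sum over the (unique) coordinate equal to k
  have step1 : ∀ f ∈ (Fintype.piFinset fun _ : Fin (j+1) => Finset.Icc 1 k).filter
      (fun f => Function.Injective f ∧ ∃ i, f i = k),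
      (∏ l, (1:ℚ)/(f l : ℚ))
        = ∑ i, if f i = k then ∏ l, (1:ℚ)/(f l : ℚ) else 0 := by
    intro f hf
    obtain ⟨-, hinj, i₀, hi₀⟩ := Finset.mem_filter.mp hf
    have key : ∀ i, (f i = k) = (i = i₀) := fun i =>
      propext ⟨fun h => hinj (h.trans hi₀.symm), fun h => h ▸ hi₀⟩
    simp only [key]
    simp
  rw [Finset.sum_congr rfl step1, Finset.sum_comm]
  -- rewrite each inner sum as a sum over a filtered set
  have step2 : ∀ i : Fin (j+1),
      (∑ f ∈ (Fintype.piFinset fun _ : Fin (j+1) => Finset.Icc 1 k).filter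
        (fun f => Function.Injective f ∧ ∃ i, f i = k),
        if f i = k then ∏ l, (1:ℚ)/(f l : ℚ) else 0)
      = ∑ f ∈ (Fintype.piFinset fun _ : Fin (j+1) => Finset.Icc 1 k).filter
          (fun f => Function.Injective f ∧ f i = k), ∏ l, (1:ℚ)/(f l : ℚ) := by
    intro i
    rw [Finset.sum_filter, Finset.sum_filter]
    apply Finset.sum_congr rfl
    intro f _
    by_cases hinj : Function.Injective f
    · by_cases h : f i = k
      · have hex : ∃ l, f l = k := ⟨i, h⟩
        simp [h, hinj, hex]
      · simp [h]
    · simp [hinj]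
  rw [Finset.sum_congr rfl (fun i _ => step2 i)]
  -- move the distinguished coordinate to the last position
  have step3 : ∀ i : Fin (j+1),
      (∑ f ∈ (Fintype.piFinset fun _ : Fin (j+1) => Finset.Icc 1 k).filter
          (fun f => Function.Injective f ∧ f i = k), ∏ l, (1:ℚ)/(f l : ℚ))
      = ∑ f ∈ (Fintype.piFinset fun _ : Fin (j+1) => Finset.Icc 1 k).filter
          (fun f => Function.Injective f ∧ f (Fin.last j) = k), ∏ l, (1:ℚ)/(f l : ℚ) := by
    intro i
    apply sum_comp_perm (Equiv.swap i (Fin.last j))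
    · intro f
      constructor
      · rintro ⟨hinj, hfi⟩
        refine ⟨hinj.comp (Equiv.swap i (Fin.last j)).injective, ?_⟩
        simpa [Equiv.swap_apply_right] using hfi
      · rintro ⟨hinj, hfi⟩
        refine ⟨?_, ?_⟩
        · have := hinj.comp (Equiv.swap i (Fin.last j)).injective
          have heq : (f ∘ ⇑(Equiv.swap i (Fin.last j))) ∘ ⇑(Equiv.swap i (Fin.last j)) = f := by
            ext l; simp
          rw [heq] at this
          exact this
        · simpa [Equiv.swap_apply_right] using hfi
    · intro f
      exact (Equiv.prod_comp (Equiv.swap i (Fin.last j)) (fun l => (1:ℚ)/(f l : ℚ))).symm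
  rw [Finset.sum_congr rfl (fun i _ => step3 i), Finset.sum_const, Finset.card_univ,
    Fintype.card_fin, nsmul_eq_mul]
  -- peel off the last coordinate
  have step4 :
      (∑ f ∈ (Fintype.piFinset fun _ : Fin (j+1) => Finset.Icc 1 k).filter
          (fun f => Function.Injective f ∧ f (Fin.last j) = k), ∏ l, (1:ℚ)/(f l : ℚ))
      = ∑ g ∈ (Fintype.piFinset fun _ : Fin j => Finset.Icc 1 (k-1)).filter
          (fun g => Function.Injective g), (∏ l, (1:ℚ)/(g l : ℚ)) * ((1:ℚ)/(k:ℚ)) := by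
    apply Finset.sum_nbij' (i := fun f => Fin.init f) (j := fun g => Fin.snoc g k)
    · intro f hf
      simp only [Finset.mem_filter, Fintype.mem_piFinset, Finset.mem_Icc] at hf ⊢
      obtain ⟨hmem, hinj, hlast⟩ := hf
      constructor
      · intro l
        have h1 := hmem l.castSucc
        have hne : f l.castSucc ≠ k := by
          intro hc
          have : l.castSucc = Fin.last j := hinj (hc.trans hlast.symm)
          exact absurd this (Fin.castSucc_lt_last l).ne
        unfold Fin.init
        omega
      · intro a b hab
        simp only [Fin.init] at hab
        exact Fin.castSucc_injective _ (hinj hab)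
    · intro g hg
      simp only [Finset.mem_filter, Fintype.mem_piFinset, Finset.mem_Icc] at hg ⊢
      obtain ⟨hmem, hinj⟩ := hg
      refine ⟨?_, ?_, Fin.snoc_last _ _⟩
      · intro l
        induction l using Fin.lastCases with
        | last => rw [Fin.snoc_last]; omega
        | cast l =>
          rw [Fin.snoc_castSucc]
          have := hmem l
          omega
      · intro a b hab
        induction a using Fin.lastCases with
        | last =>
          induction b using Fin.lastCases with
          | last => rfl
          | cast b =>
            rw [Fin.snoc_last, Fin.snoc_castSucc] at hab
            have := (hmem b).2
            omega
        | cast a =>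
          induction b using Fin.lastCases with
          | last =>
            rw [Fin.snoc_last, Fin.snoc_castSucc] at hab
            have := (hmem a).2
            omega
          | cast b =>
            rw [Fin.snoc_castSucc, Fin.snoc_castSucc] at hab
            exact congrArg Fin.castSucc (hinj hab)
    · intro f hf
      obtain ⟨-, -, hlast⟩ := Finset.mem_filter.mp hf
      rw [← hlast]
      exact Fin.snoc_init_self f
    · intro g _
      simp
    · intro f hf
      obtain ⟨-, -, hlast⟩ := Finset.mem_filter.mp hf
      rw [Fin.prod_univ_castSucc, hlast]
      rfl
  rw [step4, ← Finset.sum_mul]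
  have hkne : (k:ℚ) ≠ 0 := Nat.cast_ne_zero.mpr hk.ne'
  push_cast
  field_simp

lemma base (k : ℕ) : A 1 k = B 1 k := by
  unfold A As B
  congr 1
  ext f
  simp only [Finset.mem_filter, Fintype.mem_piFinset]
  constructor
  · rintro ⟨h1, h2⟩
    rw [Fin.sum_univ_one] at h2
    exact ⟨h1, fun a b _ => Subsingleton.elim a b, ⟨0, h2⟩⟩
  · rintro ⟨h1, -, i, hi⟩
    refine ⟨h1, ?_⟩
    rw [Fin.sum_univ_one, show (0 : Fin 1) = i from Subsingleton.elim _ _]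
    exact hi

lemma A_eq_B : ∀ j, 0 < j → ∀ k, A j k = B j k := by
  intro j
  induction j with
  | zero => exact fun h => absurd h (lt_irrefl 0)
  | succ j ih =>
    intro _ k
    rcases Nat.eq_zero_or_pos j with hj0 | hj
    · subst hj0; exact base k
    rcases Nat.eq_zero_or_pos k with hk0 | hk
    · subst hk0
      rw [A_zero (by omega), B_zero (by omega)]
    have hkq : (k:ℚ) ≠ 0 := Nat.cast_ne_zero.mpr hk.ne'
    apply mul_left_cancel₀ hkq
    rw [A_rec j k hk, B_rec j k hk, C_eq _ hj]
    congr 1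
    have hsplit : ∑ m ∈ Finset.range k, A j m
        = (∑ m ∈ Finset.Ico 0 1, A j m) + ∑ m ∈ Finset.Ico 1 k, A j m := by
      rw [Finset.range_eq_Ico,
        Finset.sum_Ico_consecutive _ (by omega : (0:ℕ) ≤ 1) (by omega : 1 ≤ k)]
    have hIcc : Finset.Ico 1 k = Finset.Icc 1 (k-1) := by
      ext m
      simp only [Finset.mem_Ico, Finset.mem_Icc]
      omega
    rw [hsplit, hIcc]
    have h0 : ∑ m ∈ Finset.Ico 0 1, A j m = A j 0 := by
      simp
    rw [h0, A_zero hj, zero_add]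
    exact Finset.sum_congr rfl (fun m _ => ih hj m)

end LubellAux

/-- Refinement of Lubell's identity: for positive integers `j` and `k`, the sum of
  `1/(w₁⋯w_j)` over ordered `j`-tuples from `{1,…,k}` with `w₁+⋯+w_j = k` equals
  the sum of `1/(w₁⋯w_j)` over ordered `j`-tuples from `{1,…,k}` with pairwise
  distinct entries whose maximum is exactly `k` (i.e. some entry equals `k`). -/
theorem lubell_identity_refined (j k : ℕ) (hj : 0 < j) (hk : 0 < k) :
    ∑ f ∈ (Fintype.piFinset fun _ : Fin j => Finset.Icc 1 k).filter
          (fun f => ∑ i, f i = k),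
        ∏ i, (1 : ℚ) / (f i : ℚ)
      = ∑ f ∈ (Fintype.piFinset fun _ : Fin j => Finset.Icc 1 k).filter
            (fun f => Function.Injective f ∧ ∃ i, f i = k),
          ∏ i, (1 : ℚ) / (f i : ℚ) :=
  LubellAux.A_eq_B j hj k
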